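/- Let k be a field of characteristic 2, K = k(s), and M the k[x,y]/(x²,y²)-module with basis {u_i, v_i : i ≥ 0} and action x·u_i = v_i, y·u_i = v_{i−1}, x·v_i = y·v_i = 0. Then on End_k(M)_K = K ⊗_k End_k(M) with the diagonal action of k[x,y]/(x²,y²), the element 1 ⊗ id_M lies in the kernel of multiplication by x + sy but not in its image. -/

import Mathlib

open TensorProduct

/-- The underlying space of the Klein-four module `M` with basis `{uᵢ, vᵢ : i ≥ 0}`. -/
abbrev KleinM (k : Type*) [Field k] := ((ℕ →₀ k) × (ℕ →₀ k))

/-- Multiplication by `x`: `x·uᵢ = vᵢ`, `x·vᵢ = 0`. -/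
noncomputable def opX (k : Type*) [Field k] : KleinM k →ₗ[k] KleinM k :=
  (LinearMap.inr k (ℕ →₀ k) (ℕ →₀ k)).comp (LinearMap.fst k (ℕ →₀ k) (ℕ →₀ k))

/-- Multiplication by `y`: `y·uᵢ = vᵢ₋₁` (with `v₋₁ = 0`), `y·vᵢ = 0`. -/
noncomputable def opY (k : Type*) [Field k] : KleinM k →ₗ[k] KleinM k :=
  ((LinearMap.inr k (ℕ →₀ k) (ℕ →₀ k)).comp
    (Finsupp.lcomapDomain (fun n => n + 1) (add_left_injective 1))).comp
    (LinearMap.fst k (ℕ →₀ k) (ℕ →₀ k))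

/-- The diagonal action of `x` on `End_k(M)` (characteristic 2): `x·f = x∘f + f∘x`. -/
noncomputable def DX (k : Type*) [Field k] :
    (KleinM k →ₗ[k] KleinM k) →ₗ[k] (KleinM k →ₗ[k] KleinM k) :=
  LinearMap.llcomp k (KleinM k) (KleinM k) (KleinM k) (opX k) +
    LinearMap.lcomp k (KleinM k) (opX k)

/-- The diagonal action of `y` on `End_k(M)` (characteristic 2): `y·f = y∘f + f∘y`. -/
noncomputable def DY (k : Type*) [Field k] :
    (KleinM k →ₗ[k] KleinM k) →ₗ[k] (KleinM k →ₗ[k] KleinM k) :=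
  LinearMap.llcomp k (KleinM k) (KleinM k) (KleinM k) (opY k) +
    LinearMap.lcomp k (KleinM k) (opY k)

section Aux

variable (k : Type*) [Field k]

/-- The basis vector `uₙ`. -/
noncomputable def uuK (n : ℕ) : KleinM k := (Finsupp.single n 1, 0)

/-- The basis vector `vₙ`. -/
noncomputable def vvK (n : ℕ) : KleinM k := (0, Finsupp.single n 1)

/-- `f ↦` the `u₀`-coefficient of `f (vₙ)`. -/
noncomputable def alphaF (n : ℕ) : (KleinM k →ₗ[k] KleinM k) →ₗ[k] k :=
  (Finsupp.lapply 0).comp ((LinearMap.fst k (ℕ →₀ k) (ℕ →₀ k)).comp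
    (LinearMap.applyₗ (vvK k n)))

/-- `f ↦` the `u₀`-coefficient of `f (uₙ)`. -/
noncomputable def betaF (n : ℕ) : (KleinM k →ₗ[k] KleinM k) →ₗ[k] k :=
  (Finsupp.lapply 0).comp ((LinearMap.fst k (ℕ →₀ k) (ℕ →₀ k)).comp
    (LinearMap.applyₗ (uuK k n)))

lemma alphaF_apply (n : ℕ) (f : KleinM k →ₗ[k] KleinM k) :
    alphaF k n f = (f (vvK k n)).1 0 := rfl

lemma betaF_apply (n : ℕ) (f : KleinM k →ₗ[k] KleinM k) :
    betaF k n f = (f (uuK k n)).1 0 := rfl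

/-- Scalar extension of a functional `φ : End → k` to `K ⊗ End → K`. -/
noncomputable def extS (φ : (KleinM k →ₗ[k] KleinM k) →ₗ[k] k) :
    (RatFunc k ⊗[k] (KleinM k →ₗ[k] KleinM k)) →ₗ[RatFunc k] RatFunc k :=
  TensorProduct.AlgebraTensorModule.lift
    (LinearMap.toSpanSingleton (RatFunc k) ((KleinM k →ₗ[k] KleinM k) →ₗ[k] RatFunc k)
      ((Algebra.linearMap k (RatFunc k)).comp φ))

lemma extS_tmul (φ : (KleinM k →ₗ[k] KleinM k) →ₗ[k] k) (c : RatFunc k)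
    (f : KleinM k →ₗ[k] KleinM k) :
    extS k φ (c ⊗ₜ[k] f) = algebraMap k (RatFunc k) (φ f) * c := by
  simp [extS, TensorProduct.AlgebraTensorModule.lift_tmul, LinearMap.toSpanSingleton_apply,
    Algebra.smul_def, mul_comm]

lemma opX_uuK (n : ℕ) : opX k (uuK k n) = vvK k n := by
  simp [opX, uuK, vvK]

lemma opY_uuK_zero : opY k (uuK k 0) = 0 := by
  refine Prod.ext rfl ?_
  ext m
  show (Finsupp.single 0 1 : ℕ →₀ k) (m + 1) = (0 : ℕ →₀ k) m
  rw [Finsupp.single_eq_of_ne' (Nat.succ_ne_zero m).symm, Finsupp.coe_zero, Pi.zero_apply]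

lemma opY_uuK_succ (n : ℕ) : opY k (uuK k (n + 1)) = vvK k n := by
  refine Prod.ext rfl ?_
  ext m
  show (Finsupp.single (n + 1) 1 : ℕ →₀ k) (m + 1) = (Finsupp.single n 1 : ℕ →₀ k) m
  rcases eq_or_ne m n with rfl | h
  · simp
  · rw [Finsupp.single_eq_of_ne' (by omega), Finsupp.single_eq_of_ne' (Ne.symm h)]

lemma fst_opX (w : KleinM k) : (opX k w).1 = 0 := rfl

lemma fst_opY (w : KleinM k) : (opY k w).1 = 0 := rfl

lemma betaF_DX (n : ℕ) (f : KleinM k →ₗ[k] KleinM k) :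
    betaF k n (DX k f) = alphaF k n f := by
  simp only [betaF_apply, alphaF_apply, DX, LinearMap.add_apply, LinearMap.llcomp_apply,
    LinearMap.lcomp_apply, LinearMap.comp_apply, Prod.fst_add, Finsupp.add_apply,
    fst_opX, opX_uuK, Finsupp.coe_zero, Pi.zero_apply, zero_add]

lemma betaF_DY_zero (f : KleinM k →ₗ[k] KleinM k) :
    betaF k 0 (DY k f) = 0 := by
  simp only [betaF_apply, DY, LinearMap.add_apply, LinearMap.llcomp_apply,
    LinearMap.lcomp_apply, LinearMap.comp_apply, Prod.fst_add, Finsupp.add_apply,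
    fst_opY, opY_uuK_zero, map_zero, Finsupp.coe_zero, Pi.zero_apply, zero_add,
    Prod.fst_zero]

lemma betaF_DY_succ (n : ℕ) (f : KleinM k →ₗ[k] KleinM k) :
    betaF k (n + 1) (DY k f) = alphaF k n f := by
  simp only [betaF_apply, alphaF_apply, DY, LinearMap.add_apply, LinearMap.llcomp_apply,
    LinearMap.lcomp_apply, LinearMap.comp_apply, Prod.fst_add, Finsupp.add_apply,
    fst_opY, opY_uuK_succ, Finsupp.coe_zero, Pi.zero_apply, zero_add]

/-- The operator `x + s·y` on `K ⊗ End`. -/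
noncomputable def TT : (RatFunc k ⊗[k] (KleinM k →ₗ[k] KleinM k)) →ₗ[RatFunc k]
    (RatFunc k ⊗[k] (KleinM k →ₗ[k] KleinM k)) :=
  (DX k).baseChange (RatFunc k) + (RatFunc.X : RatFunc k) • (DY k).baseChange (RatFunc k)

lemma extS_TT_zero (g : RatFunc k ⊗[k] (KleinM k →ₗ[k] KleinM k)) :
    extS k (betaF k 0) (TT k g) = extS k (alphaF k 0) g := by
  induction g using TensorProduct.induction_on with
  | zero => simp
  | tmul c f =>
      rw [TT, LinearMap.add_apply, LinearMap.smul_apply, LinearMap.baseChange_tmul,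
        LinearMap.baseChange_tmul, smul_tmul', map_add]
      simp only [extS_tmul, betaF_DX, betaF_DY_zero, map_zero, zero_mul, add_zero]
  | add a b ha hb => rw [map_add, map_add, map_add, ha, hb]

lemma extS_TT_succ (n : ℕ) (g : RatFunc k ⊗[k] (KleinM k →ₗ[k] KleinM k)) :
    extS k (betaF k (n + 1)) (TT k g) =
      extS k (alphaF k (n + 1)) g + RatFunc.X * extS k (alphaF k n) g := by
  induction g using TensorProduct.induction_on with
  | zero => simp
  | tmul c f =>
      rw [TT, LinearMap.add_apply, LinearMap.smul_apply, LinearMap.baseChange_tmul,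
        LinearMap.baseChange_tmul, smul_tmul', map_add]
      simp only [extS_tmul, betaF_DX, betaF_DY_succ, smul_eq_mul]
      ring
  | add a b ha hb =>
      rw [map_add, map_add, map_add, map_add, ha, hb]
      ring

lemma extS_finspan (g : RatFunc k ⊗[k] (KleinM k →ₗ[k] KleinM k)) :
    ∃ S : Finset (RatFunc k), ∀ φ : (KleinM k →ₗ[k] KleinM k) →ₗ[k] k,
      extS k φ g ∈ Submodule.span k (S : Set (RatFunc k)) := by
  classical
  induction g using TensorProduct.induction_on with
  | zero => exact ⟨∅, fun φ => by simp⟩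
  | tmul c f =>
      refine ⟨{c}, fun φ => ?_⟩
      rw [extS_tmul, ← Algebra.smul_def]
      exact Submodule.smul_mem _ _ (Submodule.subset_span (by simp))
  | add a b ha hb =>
      obtain ⟨S₁, h₁⟩ := ha
      obtain ⟨S₂, h₂⟩ := hb
      refine ⟨S₁ ∪ S₂, fun φ => ?_⟩
      rw [map_add]
      exact add_mem
        (Submodule.span_mono (Finset.coe_subset.2 Finset.subset_union_left) (h₁ φ))
        (Submodule.span_mono (Finset.coe_subset.2 Finset.subset_union_right) (h₂ φ))

lemma transcendental_ratFuncX : Transcendental k (RatFunc.X : RatFunc k) := by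
  rw [← RatFunc.algebraMap_X]
  exact (transcendental_algebraMap_iff (RatFunc.algebraMap_injective k)).2
    (Polynomial.transcendental_X k)

lemma linearIndependent_ratFuncX_pow :
    LinearIndependent k (fun n : ℕ => (RatFunc.X : RatFunc k) ^ n) := by
  have htr := transcendental_ratFuncX k
  rw [transcendental_iff] at htr
  rw [linearIndependent_iff']
  intro s g hg i hi
  have hp : Polynomial.aeval (RatFunc.X : RatFunc k)
      (∑ j ∈ s, Polynomial.C (g j) * Polynomial.X ^ j) = 0 := by
    rw [map_sum]
    simpa [Algebra.smul_def] using hg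
  have h0 := htr _ hp
  have := congrArg (fun p => Polynomial.coeff p i) h0
  simpa [Polynomial.finset_sum_coeff, Polynomial.coeff_C_mul, Polynomial.coeff_X_pow,
    Finset.sum_ite_eq' s, hi] using this

end Aux

/-- On `End_k(M)_K = K ⊗_k End_k(M)` with `K = k(s)` and the diagonal action of
`k[x,y]/(x²,y²)`, the element `1 ⊗ id_M` lies in the kernel of multiplication by `x + sy`
but not in its image. -/
theorem stmt13 (k : Type*) [Field k] [CharP k 2] :
    ((DX k).baseChange (RatFunc k) + (RatFunc.X : RatFunc k) • (DY k).baseChange (RatFunc k))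
        ((1 : RatFunc k) ⊗ₜ[k] (LinearMap.id : KleinM k →ₗ[k] KleinM k)) = 0 ∧
      ((1 : RatFunc k) ⊗ₜ[k] (LinearMap.id : KleinM k →ₗ[k] KleinM k)) ∉
        LinearMap.range ((DX k).baseChange (RatFunc k) +
          (RatFunc.X : RatFunc k) • (DY k).baseChange (RatFunc k)) := by
  have htwo : (2 : k) = 0 := by
    have := CharP.cast_eq_zero k 2
    exact_mod_cast this
  have hDXid : DX k (LinearMap.id : KleinM k →ₗ[k] KleinM k) = 0 := by
    refine LinearMap.ext fun w => ?_
    show opX k w + opX k w = 0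
    rw [← two_smul k, htwo, zero_smul]
  have hDYid : DY k (LinearMap.id : KleinM k →ₗ[k] KleinM k) = 0 := by
    refine LinearMap.ext fun w => ?_
    show opY k w + opY k w = 0
    rw [← two_smul k, htwo, zero_smul]
  constructor
  · rw [LinearMap.add_apply, LinearMap.smul_apply, LinearMap.baseChange_tmul,
      LinearMap.baseChange_tmul, hDXid, hDYid]
    simp
  · rintro ⟨g, hg⟩
    -- The sequence `aₙ = extS (alphaF n) g` satisfies `a₀ = 1`, `aₙ₊₁ = -X·aₙ`.
    have hg' : TT k g = (1 : RatFunc k) ⊗ₜ[k] (LinearMap.id : KleinM k →ₗ[k] KleinM k) := hg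
    set a : ℕ → RatFunc k := fun n => extS k (alphaF k n) g with ha
    have hβid : ∀ n, betaF k n (LinearMap.id : KleinM k →ₗ[k] KleinM k)
        = if n = 0 then 1 else 0 := by
      intro n
      rw [betaF_apply]
      show (Finsupp.single n 1 : ℕ →₀ k) 0 = _
      rcases eq_or_ne n 0 with rfl | h
      · simp
      · simp [Finsupp.single_eq_of_ne h, h]
    have h0 : a 0 = 1 := by
      have := extS_TT_zero k g
      rw [hg', extS_tmul, hβid 0] at this
      simpa using this.symm
    have hrec : ∀ n, a (n + 1) = -(RatFunc.X * a n) := by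
      intro n
      have := extS_TT_succ k n g
      rw [hg', extS_tmul, hβid (n + 1)] at this
      simp only [Nat.succ_ne_zero, if_false, map_zero, zero_mul] at this
      exact eq_neg_of_add_eq_zero_left this.symm
    have hpow : ∀ n, a n = (-RatFunc.X : RatFunc k) ^ n := by
      intro n
      induction n with
      | zero => simpa using h0
      | succ m ih => rw [hrec m, ih, pow_succ]; ring
    obtain ⟨S, hS⟩ := extS_finspan k g
    have hmem : ∀ n, (-RatFunc.X : RatFunc k) ^ n ∈
        Submodule.span k (S : Set (RatFunc k)) := by
      intro n
      rw [← hpow n]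
      exact hS (alphaF k n)
    -- powers of -X are linearly independent over k
    have hli : LinearIndependent k (fun n : ℕ => (-RatFunc.X : RatFunc k) ^ n) := by
      have h := linearIndependent_ratFuncX_pow k
      have hunits : ∀ n : ℕ, (-RatFunc.X : RatFunc k) ^ n
          = ((-1 : k)) ^ n • (RatFunc.X : RatFunc k) ^ n := by
        intro n
        rw [neg_pow, Algebra.smul_def, map_pow, map_neg, map_one]
      rw [linearIndependent_iff'] at h ⊢
      intro s g' hg'' i hi
      have : ∑ j ∈ s, (g' j * (-1 : k) ^ j) • (RatFunc.X : RatFunc k) ^ j = 0 := by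
        rw [← hg'']
        refine Finset.sum_congr rfl fun j _ => ?_
        rw [hunits j, smul_smul]
      have := h s (fun j => g' j * (-1 : k) ^ j) this i hi
      have hne : ((-1 : k) ^ i) ≠ 0 := pow_ne_zero _ (neg_ne_zero.mpr one_ne_zero)
      exact (mul_eq_zero.mp this).resolve_right hne
    -- contradiction with finite-dimensionality of the span
    haveI : FiniteDimensional k (Submodule.span k (S : Set (RatFunc k))) :=
      FiniteDimensional.span_of_finite k (Finset.finite_toSet S)
    set W := Submodule.span k (S : Set (RatFunc k))
    have hli' : LinearIndependent k (fun n : ℕ => (⟨(-RatFunc.X : RatFunc k) ^ n, hmem n⟩ : W)) :=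
      LinearIndependent.of_comp W.subtype (by exact hli)
    have hcard := hli'.cardinal_lift_le_rank
    have hfin : Module.rank k W < Cardinal.aleph0 := Module.rank_lt_aleph0 k W
    rw [Cardinal.mk_nat] at hcard
    have : Cardinal.aleph0 ≤ Cardinal.lift.{0} (Module.rank k W) := by simpa using hcard
    exact absurd (lt_of_le_of_lt this (by simpa using hfin)) (lt_irrefl _)
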